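/- Let L be a 2×2 operator matrix function on Ω in H = H₁ ⊕ H₂. (i) W²(L) ⊆ W(L) and W²_Ψ(L) ⊆ W_Ψ(L), where W(L) := {λ ∈ Ω : ∃ x ∈ dom L(λ), ‖x‖ = 1, ⟨L(λ)x, x⟩ = 0} and W_Ψ(L) := ⋂_{ε>0} ⋃_{‖𝓑‖<ε} W(L + 𝓑). (ii) Suppose dim H₂ ≥ 2 and D₂(λ) is dense in H₂ for every λ ∈ Ω. If λ ∈ Ω with dom A(λ) ⊆ dom C(λ) and there is f ∈ dom A(λ), ‖f‖ = 1, with ⟨A(λ)f, f⟩ = 0, then λ ∈ W²(L); if λ ∈ Ω with dom A(λ) ⊆ dom C(λ) and 0 ∈ closure{⟨A(λ)f, f⟩ : f ∈ dom A(λ), ‖f‖ = 1}, then λ ∈ W²_{Ψ,2}(L) ⊆ W²_Ψ(L). -/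

import Mathlib

open Filter Topology

noncomputable section

variable {H₁ H₂ : Type*}
  [NormedAddCommGroup H₁] [InnerProductSpace ℂ H₁] [CompleteSpace H₁]
  [NormedAddCommGroup H₂] [InnerProductSpace ℂ H₂] [CompleteSpace H₂]

local notation "⟪" x ", " y "⟫" => @inner ℂ _ _ x y

/-- First diagonal block component `𝓑₁₁ f = P₁ 𝓑 (f, 0)` of a bounded operator on
the Hilbert space direct sum `H₁ ⊕ H₂`. -/
def blk11 (𝓑 : WithLp 2 (H₁ × H₂) →L[ℂ] WithLp 2 (H₁ × H₂)) (f : H₁) : H₁ :=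
  ((WithLp.equiv 2 (H₁ × H₂)) (𝓑 ((WithLp.equiv 2 (H₁ × H₂)).symm (f, 0)))).1

/-- Block component `𝓑₂₁ f = P₂ 𝓑 (f, 0)`. -/
def blk21 (𝓑 : WithLp 2 (H₁ × H₂) →L[ℂ] WithLp 2 (H₁ × H₂)) (f : H₁) : H₂ :=
  ((WithLp.equiv 2 (H₁ × H₂)) (𝓑 ((WithLp.equiv 2 (H₁ × H₂)).symm (f, 0)))).2

/-- Block component `𝓑₁₂ g = P₁ 𝓑 (0, g)`. -/
def blk12 (𝓑 : WithLp 2 (H₁ × H₂) →L[ℂ] WithLp 2 (H₁ × H₂)) (g : H₂) : H₁ :=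
  ((WithLp.equiv 2 (H₁ × H₂)) (𝓑 ((WithLp.equiv 2 (H₁ × H₂)).symm (0, g)))).1

/-- Block component `𝓑₂₂ g = P₂ 𝓑 (0, g)`. -/
def blk22 (𝓑 : WithLp 2 (H₁ × H₂) →L[ℂ] WithLp 2 (H₁ × H₂)) (g : H₂) : H₂ :=
  ((WithLp.equiv 2 (H₁ × H₂)) (𝓑 ((WithLp.equiv 2 (H₁ × H₂)).symm (0, g)))).2

/-- The quadratic numerical range `W²(L)` of the 2×2 operator matrix function with
entries `A(λ), B(λ), C(λ), D(λ)` on `Ω`. -/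
def qnr (Ω : Set ℂ) (A : ℂ → H₁ →ₗ.[ℂ] H₁) (B : ℂ → H₂ →ₗ.[ℂ] H₁)
    (C : ℂ → H₁ →ₗ.[ℂ] H₂) (D : ℂ → H₂ →ₗ.[ℂ] H₂) : Set ℂ :=
  {l | l ∈ Ω ∧ ∃ (f : H₁) (g : H₂) (hfA : f ∈ (A l).domain) (hfC : f ∈ (C l).domain)
    (hgB : g ∈ (B l).domain) (hgD : g ∈ (D l).domain), ‖f‖ = 1 ∧ ‖g‖ = 1 ∧
    ⟪f, (A l) ⟨f, hfA⟩⟫ * ⟪g, (D l) ⟨g, hgD⟩⟫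
      - ⟪f, (B l) ⟨g, hgB⟩⟫ * ⟪g, (C l) ⟨f, hfC⟩⟫ = 0}

/-- `W²(L + 𝓑)` for a bounded perturbation `𝓑` of the whole matrix. -/
def qnrPert (Ω : Set ℂ) (A : ℂ → H₁ →ₗ.[ℂ] H₁) (B : ℂ → H₂ →ₗ.[ℂ] H₁)
    (C : ℂ → H₁ →ₗ.[ℂ] H₂) (D : ℂ → H₂ →ₗ.[ℂ] H₂)
    (𝓑 : WithLp 2 (H₁ × H₂) →L[ℂ] WithLp 2 (H₁ × H₂)) : Set ℂ :=
  {l | l ∈ Ω ∧ ∃ (f : H₁) (g : H₂) (hfA : f ∈ (A l).domain) (hfC : f ∈ (C l).domain)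
    (hgB : g ∈ (B l).domain) (hgD : g ∈ (D l).domain), ‖f‖ = 1 ∧ ‖g‖ = 1 ∧
    ⟪f, (A l) ⟨f, hfA⟩ + blk11 𝓑 f⟫ * ⟪g, (D l) ⟨g, hgD⟩ + blk22 𝓑 g⟫
      - ⟪f, (B l) ⟨g, hgB⟩ + blk12 𝓑 g⟫ * ⟪g, (C l) ⟨f, hfC⟩ + blk21 𝓑 f⟫ = 0}

/-- `W²_ε(L) = ⋃_{‖𝓑‖<ε} W²(L + 𝓑)`. -/
def qnrEps (Ω : Set ℂ) (A : ℂ → H₁ →ₗ.[ℂ] H₁) (B : ℂ → H₂ →ₗ.[ℂ] H₁)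
    (C : ℂ → H₁ →ₗ.[ℂ] H₂) (D : ℂ → H₂ →ₗ.[ℂ] H₂) (ε : ℝ) : Set ℂ :=
  ⋃ (𝓑 : WithLp 2 (H₁ × H₂) →L[ℂ] WithLp 2 (H₁ × H₂)) (_ : ‖𝓑‖ < ε),
    qnrPert Ω A B C D 𝓑

/-- The pseudo quadratic numerical range `W²_Ψ(L) = ⋂_{ε>0} W²_ε(L)`. -/
def qnrPsi (Ω : Set ℂ) (A : ℂ → H₁ →ₗ.[ℂ] H₁) (B : ℂ → H₂ →ₗ.[ℂ] H₁)
    (C : ℂ → H₁ →ₗ.[ℂ] H₂) (D : ℂ → H₂ →ₗ.[ℂ] H₂) : Set ℂ :=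
  ⋂ ε > (0 : ℝ), qnrEps Ω A B C D ε

/-- `W²(L + diag(B₁, B₂))` for bounded diagonal perturbations. -/
def qnrDiag (Ω : Set ℂ) (A : ℂ → H₁ →ₗ.[ℂ] H₁) (B : ℂ → H₂ →ₗ.[ℂ] H₁)
    (C : ℂ → H₁ →ₗ.[ℂ] H₂) (D : ℂ → H₂ →ₗ.[ℂ] H₂)
    (B₁ : H₁ →L[ℂ] H₁) (B₂ : H₂ →L[ℂ] H₂) : Set ℂ :=
  {l | l ∈ Ω ∧ ∃ (f : H₁) (g : H₂) (hfA : f ∈ (A l).domain) (hfC : f ∈ (C l).domain)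
    (hgB : g ∈ (B l).domain) (hgD : g ∈ (D l).domain), ‖f‖ = 1 ∧ ‖g‖ = 1 ∧
    ⟪f, (A l) ⟨f, hfA⟩ + B₁ f⟫ * ⟪g, (D l) ⟨g, hgD⟩ + B₂ g⟫
      - ⟪f, (B l) ⟨g, hgB⟩⟫ * ⟪g, (C l) ⟨f, hfC⟩⟫ = 0}

/-- `W²_{Ψ,2}(L) = ⋂_{ε>0} ⋃_{‖B₁‖<ε, ‖B₂‖<ε} W²(L + diag(B₁, B₂))`. -/
def qnrPsi2 (Ω : Set ℂ) (A : ℂ → H₁ →ₗ.[ℂ] H₁) (B : ℂ → H₂ →ₗ.[ℂ] H₁)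
    (C : ℂ → H₁ →ₗ.[ℂ] H₂) (D : ℂ → H₂ →ₗ.[ℂ] H₂) : Set ℂ :=
  ⋂ ε > (0 : ℝ), ⋃ (B₁ : H₁ →L[ℂ] H₁) (B₂ : H₂ →L[ℂ] H₂)
    (_ : ‖B₁‖ < ε ∧ ‖B₂‖ < ε), qnrDiag Ω A B C D B₁ B₂

/-- The numerical range `W(L + 𝓑)` of the perturbed full operator matrix function on the
Hilbert space direct sum `H = H₁ ⊕ H₂`. -/
def fullWPert (Ω : Set ℂ) (A : ℂ → H₁ →ₗ.[ℂ] H₁) (B : ℂ → H₂ →ₗ.[ℂ] H₁)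
    (C : ℂ → H₁ →ₗ.[ℂ] H₂) (D : ℂ → H₂ →ₗ.[ℂ] H₂)
    (𝓑 : WithLp 2 (H₁ × H₂) →L[ℂ] WithLp 2 (H₁ × H₂)) : Set ℂ :=
  {l | l ∈ Ω ∧ ∃ (f : H₁) (g : H₂) (hfA : f ∈ (A l).domain) (hfC : f ∈ (C l).domain)
    (hgB : g ∈ (B l).domain) (hgD : g ∈ (D l).domain),
    ‖(WithLp.equiv 2 (H₁ × H₂)).symm (f, g)‖ = 1 ∧
    ⟪(WithLp.equiv 2 (H₁ × H₂)).symm (f, g),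
      (WithLp.equiv 2 (H₁ × H₂)).symm
        ((A l) ⟨f, hfA⟩ + (B l) ⟨g, hgB⟩, (C l) ⟨f, hfC⟩ + (D l) ⟨g, hgD⟩)
      + 𝓑 ((WithLp.equiv 2 (H₁ × H₂)).symm (f, g))⟫ = 0}

/-- The numerical range `W(L)` of the full operator matrix function. -/
def fullW (Ω : Set ℂ) (A : ℂ → H₁ →ₗ.[ℂ] H₁) (B : ℂ → H₂ →ₗ.[ℂ] H₁)
    (C : ℂ → H₁ →ₗ.[ℂ] H₂) (D : ℂ → H₂ →ₗ.[ℂ] H₂) : Set ℂ :=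
  {l | l ∈ Ω ∧ ∃ (f : H₁) (g : H₂) (hfA : f ∈ (A l).domain) (hfC : f ∈ (C l).domain)
    (hgB : g ∈ (B l).domain) (hgD : g ∈ (D l).domain),
    ‖(WithLp.equiv 2 (H₁ × H₂)).symm (f, g)‖ = 1 ∧
    ⟪(WithLp.equiv 2 (H₁ × H₂)).symm (f, g),
      (WithLp.equiv 2 (H₁ × H₂)).symm
        ((A l) ⟨f, hfA⟩ + (B l) ⟨g, hgB⟩, (C l) ⟨f, hfC⟩ + (D l) ⟨g, hgD⟩)⟫ = 0}

/-- The pseudo numerical range `W_Ψ(L) = ⋂_{ε>0} ⋃_{‖𝓑‖<ε} W(L + 𝓑)` of the full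
operator matrix function. -/
def fullWPsi (Ω : Set ℂ) (A : ℂ → H₁ →ₗ.[ℂ] H₁) (B : ℂ → H₂ →ₗ.[ℂ] H₁)
    (C : ℂ → H₁ →ₗ.[ℂ] H₂) (D : ℂ → H₂ →ₗ.[ℂ] H₂) : Set ℂ :=
  ⋂ ε > (0 : ℝ), ⋃ (𝓑 : WithLp 2 (H₁ × H₂) →L[ℂ] WithLp 2 (H₁ × H₂))
    (_ : ‖𝓑‖ < ε), fullWPert Ω A B C D 𝓑

lemma aux_kernel_vec (a b c d : ℂ) (h : a*d - b*c = 0) :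
    ∃ α β : ℂ, ‖α‖^2 + ‖β‖^2 = 1 ∧ a*α + b*β = 0 ∧ c*α + d*β = 0 := by
  have main : ∃ x y : ℂ, ¬(x = 0 ∧ y = 0) ∧ a*x + b*y = 0 ∧ c*x + d*y = 0 := by
    by_cases hab : a = 0 ∧ b = 0
    · by_cases hcd : c = 0 ∧ d = 0
      · exact ⟨1, 0, by simp, by simp [hab.1, hab.2], by simp [hcd.1, hcd.2]⟩
      · exact ⟨d, -c, by rintro ⟨h1, h2⟩; exact hcd ⟨by simpa using h2, h1⟩,
          by simp [hab.1, hab.2], by ring⟩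
    · refine ⟨b, -a, by rintro ⟨h1, h2⟩; exact hab ⟨by simpa using h2, h1⟩, by ring, ?_⟩
      have : c*b + d*(-a) = -(a*d - b*c) := by ring
      rw [this, h, neg_zero]
  obtain ⟨x, y, hxy, h1, h2⟩ := main
  set r : ℝ := Real.sqrt (‖x‖^2 + ‖y‖^2) with hr
  have hsum : 0 < ‖x‖^2 + ‖y‖^2 := by
    rcases not_and_or.mp hxy with hx | hy
    · have := norm_pos_iff.mpr hx
      positivity
    · have := norm_pos_iff.mpr hy
      positivity
  have hrpos : 0 < r := Real.sqrt_pos.mpr hsum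
  have hr2 : r^2 = ‖x‖^2 + ‖y‖^2 := Real.sq_sqrt hsum.le
  refine ⟨x / r, y / r, ?_, ?_, ?_⟩
  · have hnr : ‖(r:ℂ)‖ = r := by
      simp [Complex.norm_real, abs_of_pos hrpos]
    rw [norm_div, norm_div, hnr, div_pow, div_pow, ← add_div, hr2]
    exact div_self hsum.ne'
  · rw [← mul_div_assoc, ← mul_div_assoc, ← add_div, h1, zero_div]
  · rw [← mul_div_assoc, ← mul_div_assoc, ← add_div, h2, zero_div]

lemma aux_orth (hrank : (2:Cardinal) ≤ Module.rank ℂ H₂)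
    (S : Submodule ℂ H₂) (hS : Dense (S : Set H₂)) (h : H₂) :
    ∃ g : H₂, g ∈ S ∧ ‖g‖ = 1 ∧ ⟪g, h⟫ = 0 := by
  have hne : ∃ g : H₂, g ∈ S ∧ g ≠ 0 ∧ ⟪h, g⟫ = 0 := by
    by_contra hcon
    push_neg at hcon
    have hinj : Function.Injective (((innerSL ℂ h).toLinearMap).domRestrict S) := by
      intro u v huv
      simp only [LinearMap.domRestrict_apply, ContinuousLinearMap.coe_coe, innerSL_apply_apply] at huv
      have hz : ⟪h, ((u:H₂) - v)⟫ = 0 := by rw [inner_sub_right, huv, sub_self]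
      have hmem : ((u:H₂) - (v:H₂)) ∈ S := S.sub_mem u.2 v.2
      by_cases hz0 : (u:H₂) - v = 0
      · exact Subtype.ext (sub_eq_zero.mp hz0)
      · exact absurd hz (hcon _ hmem hz0)
    have hrk : Module.rank ℂ S ≤ 1 := by
      have h2 := LinearMap.lift_rank_le_of_injective (((innerSL ℂ h).toLinearMap).domRestrict S) hinj
      rw [Module.rank_self, Cardinal.lift_one, Cardinal.lift_le_one_iff] at h2
      exact h2
    have hfin : Module.Finite ℂ S :=
      Module.rank_lt_aleph0_iff.mp (hrk.trans_lt Cardinal.one_lt_aleph0)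
    have hclosed : IsClosed (S : Set H₂) := Submodule.closed_of_finiteDimensional S
    have htop : S = ⊤ := by
      have := hS.closure_eq
      rw [hclosed.closure_eq] at this
      refine Submodule.eq_top_iff'.mpr fun x => ?_
      have hx : x ∈ (S : Set H₂) := by rw [this]; trivial
      exact hx
    have : Module.rank ℂ H₂ ≤ 1 := by
      rw [← rank_top ℂ H₂, ← htop]
      exact hrk
    exact absurd (hrank.trans this) (by norm_num)
  obtain ⟨g, hgS, hg0, hgh⟩ := hne
  have hn : (0:ℝ) < ‖g‖ := norm_pos_iff.mpr hg0
  refine ⟨(‖g‖⁻¹ : ℂ) • g, S.smul_mem _ hgS, ?_, ?_⟩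
  · rw [norm_smul]
    simp [abs_of_pos hn, inv_mul_cancel₀ hn.ne']
  · have hz : ⟪g, h⟫ = 0 := inner_eq_zero_symm.mpr hgh
    rw [inner_smul_left, hz, mul_zero]

lemma key_step (Ω : Set ℂ) (A : ℂ → H₁ →ₗ.[ℂ] H₁) (B : ℂ → H₂ →ₗ.[ℂ] H₁)
    (C : ℂ → H₁ →ₗ.[ℂ] H₂) (D : ℂ → H₂ →ₗ.[ℂ] H₂)
    (𝓑 : WithLp 2 (H₁ × H₂) →L[ℂ] WithLp 2 (H₁ × H₂)) {l : ℂ}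
    (hl : l ∈ qnrPert Ω A B C D 𝓑) : l ∈ fullWPert Ω A B C D 𝓑 := by
  obtain ⟨hΩ, f, g, hfA, hfC, hgB, hgD, hf, hg, hdet⟩ := hl
  obtain ⟨α, β, hαβ, e1, e2⟩ := aux_kernel_vec _ _ _ _ hdet
  refine ⟨hΩ, α • f, β • g, (A l).domain.smul_mem α hfA, (C l).domain.smul_mem α hfC,
    (B l).domain.smul_mem β hgB, (D l).domain.smul_mem β hgD, ?_, ?_⟩
  · rw [WithLp.prod_norm_eq_of_L2]
    simp only [WithLp.equiv_symm_apply, WithLp.toLp_fst, WithLp.toLp_snd, norm_smul, mul_pow, hf, hg,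
      mul_one, one_pow]
    rw [hαβ, Real.sqrt_one]
  · have hAs : (A l) ⟨α • f, (A l).domain.smul_mem α hfA⟩ = α • (A l) ⟨f, hfA⟩ :=
      (A l).map_smul α ⟨f, hfA⟩
    have hCs : (C l) ⟨α • f, (C l).domain.smul_mem α hfC⟩ = α • (C l) ⟨f, hfC⟩ :=
      (C l).map_smul α ⟨f, hfC⟩
    have hBs : (B l) ⟨β • g, (B l).domain.smul_mem β hgB⟩ = β • (B l) ⟨g, hgB⟩ :=
      (B l).map_smul β ⟨g, hgB⟩
    have hDs : (D l) ⟨β • g, (D l).domain.smul_mem β hgD⟩ = β • (D l) ⟨g, hgD⟩ :=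
      (D l).map_smul β ⟨g, hgD⟩
    have hX : (WithLp.equiv 2 (H₁ × H₂)).symm (α • f, β • g)
        = α • (WithLp.equiv 2 (H₁ × H₂)).symm (f, 0)
          + β • (WithLp.equiv 2 (H₁ × H₂)).symm (0, g) := by
      simp only [WithLp.equiv_symm_apply, ← WithLp.toLp_smul, ← WithLp.toLp_add]
      congr 1
      simp [Prod.ext_iff]
    have hB : 𝓑 ((WithLp.equiv 2 (H₁ × H₂)).symm (α • f, β • g))
        = α • 𝓑 ((WithLp.equiv 2 (H₁ × H₂)).symm (f, 0))
          + β • 𝓑 ((WithLp.equiv 2 (H₁ × H₂)).symm (0, g)) := by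
      rw [hX, map_add, map_smul, map_smul]
    rw [hAs, hBs, hCs, hDs, WithLp.prod_inner_apply, hB]
    simp only [blk11, blk12, blk21, blk22, WithLp.equiv_apply, WithLp.ofLp_fst, WithLp.ofLp_snd,
      WithLp.equiv_symm_apply] at e1 e2
    simp only [WithLp.add_fst, WithLp.add_snd, WithLp.smul_fst, WithLp.smul_snd,
      WithLp.ofLp_fst, WithLp.ofLp_snd, WithLp.equiv_symm_apply, WithLp.toLp_fst, WithLp.toLp_snd]
    simp only [inner_add_right, inner_smul_left, inner_smul_right] at e1 e2 ⊢
    linear_combination (starRingEnd ℂ) α * e1 + (starRingEnd ℂ) β * e2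

set_option maxHeartbeats 1000000 in
/-- (i) `W²(L) ⊆ W(L)` and `W²_Ψ(L) ⊆ W_Ψ(L)`.
(ii) If `dim H₂ ≥ 2` and `D₂(λ)` is dense in `H₂` for all `λ ∈ Ω`, then for `λ ∈ Ω` with
`dom A(λ) ⊆ dom C(λ)`: `0 ∈ W(A(λ))` implies `λ ∈ W²(L)`, and `0 ∈ closure W(A(λ))`
implies `λ ∈ W²_{Ψ,2}(L) ⊆ W²_Ψ(L)`. -/
theorem qnr_subset_numRange_and_diag_numRange_subset_qnr
    (Ω : Set ℂ) (A : ℂ → H₁ →ₗ.[ℂ] H₁) (B : ℂ → H₂ →ₗ.[ℂ] H₁)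
    (C : ℂ → H₁ →ₗ.[ℂ] H₂) (D : ℂ → H₂ →ₗ.[ℂ] H₂) :
    (qnr Ω A B C D ⊆ fullW Ω A B C D) ∧
    (qnrPsi Ω A B C D ⊆ fullWPsi Ω A B C D) ∧
    ((2 : Cardinal) ≤ Module.rank ℂ H₂ →
      (∀ l ∈ Ω, Dense (((B l).domain : Set H₂) ∩ ((D l).domain : Set H₂))) →
      (∀ l ∈ Ω, (((A l).domain : Set H₁) ⊆ ((C l).domain : Set H₁)) →
        (∃ (f : H₁) (hf : f ∈ (A l).domain), ‖f‖ = 1 ∧ ⟪f, (A l) ⟨f, hf⟩⟫ = 0) →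
        l ∈ qnr Ω A B C D) ∧
      (∀ l ∈ Ω, (((A l).domain : Set H₁) ⊆ ((C l).domain : Set H₁)) →
        (0 : ℂ) ∈ closure {z : ℂ | ∃ (f : H₁) (hf : f ∈ (A l).domain),
          ‖f‖ = 1 ∧ z = ⟪f, (A l) ⟨f, hf⟩⟫} →
        l ∈ qnrPsi2 Ω A B C D ∧ qnrPsi2 Ω A B C D ⊆ qnrPsi Ω A B C D)) := by
  have key0 : ∀ 𝓑, qnrPert Ω A B C D 𝓑 ⊆ fullWPert Ω A B C D 𝓑 :=
    fun 𝓑 l hl => key_step Ω A B C D 𝓑 hl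
  have hqnr0 : qnr Ω A B C D = qnrPert Ω A B C D 0 := by
    unfold qnr qnrPert blk11 blk12 blk21 blk22
    simp
  have hfull0 : fullWPert Ω A B C D 0 = fullW Ω A B C D := by
    unfold fullWPert fullW
    simp
  refine ⟨?_, ?_, fun hrank hdense => ⟨?_, ?_⟩⟩
  · rw [hqnr0, ← hfull0]
    exact key0 0
  · intro l hl
    simp only [fullWPsi, Set.mem_iInter, Set.mem_iUnion]
    intro ε hε
    simp only [qnrPsi, qnrEps, Set.mem_iInter, Set.mem_iUnion] at hl
    obtain ⟨𝓑, h𝓑, hmem⟩ := hl ε hε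
    exact ⟨𝓑, h𝓑, key0 𝓑 hmem⟩
  · rintro l hl hsub ⟨f, hfA, hf, hA0⟩
    have hdense' : Dense (((B l).domain ⊓ (D l).domain : Submodule ℂ H₂) : Set H₂) := by
      rw [Submodule.coe_inf]
      exact hdense l hl
    obtain ⟨g, hgS, hg, horth⟩ := aux_orth hrank _ hdense' ((C l) ⟨f, hsub hfA⟩)
    exact ⟨hl, f, g, hfA, hsub hfA, (Submodule.mem_inf.mp hgS).1, (Submodule.mem_inf.mp hgS).2,
      hf, hg, by rw [hA0, horth, zero_mul, mul_zero, sub_zero]⟩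
  · intro l hl hsub hcl
    constructor
    · simp only [qnrPsi2, Set.mem_iInter, Set.mem_iUnion]
      intro ε hε
      rw [Metric.mem_closure_iff] at hcl
      obtain ⟨z, ⟨f, hfA, hf, hz⟩, hdist⟩ := hcl ε hε
      rw [dist_eq_norm, zero_sub, norm_neg, hz] at hdist
      set a : ℂ := ⟪f, (A l) ⟨f, hfA⟩⟫ with ha
      have hdense' : Dense (((B l).domain ⊓ (D l).domain : Submodule ℂ H₂) : Set H₂) := by
        rw [Submodule.coe_inf]
        exact hdense l hl
      obtain ⟨g, hgS, hg, horth⟩ := aux_orth hrank _ hdense' ((C l) ⟨f, hsub hfA⟩)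
      refine ⟨-(a • ContinuousLinearMap.id ℂ H₁), 0, ⟨?_, by simpa using hε⟩, ?_⟩
      · rw [norm_neg]
        calc ‖a • ContinuousLinearMap.id ℂ H₁‖ ≤ ‖a‖ * ‖ContinuousLinearMap.id ℂ H₁‖ :=
              norm_smul_le _ _
          _ ≤ ‖a‖ * 1 := by
              gcongr
              exact ContinuousLinearMap.norm_id_le
          _ < ε := by rw [mul_one]; exact hdist
      · have h1 : ⟪f, (A l) ⟨f, hfA⟩ + (-(a • ContinuousLinearMap.id ℂ H₁)) f⟫ = 0 := by
          simp only [ContinuousLinearMap.neg_apply, ContinuousLinearMap.smul_apply,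
            ContinuousLinearMap.id_apply, inner_add_right, inner_neg_right, inner_smul_right,
            inner_self_eq_norm_sq_to_K, hf]
          rw [← ha]
          push_cast
          ring
        exact ⟨hl, f, g, hfA, hsub hfA, (Submodule.mem_inf.mp hgS).1,
          (Submodule.mem_inf.mp hgS).2, hf, hg,
          by rw [h1, horth, zero_mul, mul_zero, sub_zero]⟩
    · intro μ hμ
      simp only [qnrPsi2, Set.mem_iInter, Set.mem_iUnion] at hμ
      simp only [qnrPsi, qnrEps, Set.mem_iInter, Set.mem_iUnion]
      intro ε hε
      obtain ⟨B₁, B₂, ⟨hB₁, hB₂⟩, hmem⟩ := hμ ε hε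
      set E := WithLp.prodContinuousLinearEquiv 2 ℂ H₁ H₂ with hE
      set 𝓑 : WithLp 2 (H₁ × H₂) →L[ℂ] WithLp 2 (H₁ × H₂) :=
        (E.symm.toContinuousLinearMap).comp ((B₁.prodMap B₂).comp E.toContinuousLinearMap)
        with h𝓑def
      have hM : ‖𝓑‖ < ε := by
        have hMnn : (0:ℝ) ≤ max ‖B₁‖ ‖B₂‖ := le_trans (norm_nonneg _) (le_max_left _ _)
        have hb : ‖𝓑‖ ≤ max ‖B₁‖ ‖B₂‖ := by
          refine ContinuousLinearMap.opNorm_le_bound _ hMnn fun x => ?_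
          have hfst : (𝓑 x).fst = B₁ x.fst := rfl
          have hsnd : (𝓑 x).snd = B₂ x.snd := rfl
          rw [WithLp.prod_norm_eq_of_L2, WithLp.prod_norm_eq_of_L2 x, hfst, hsnd,
            ← Real.sqrt_sq hMnn, ← Real.sqrt_mul (sq_nonneg _)]
          apply Real.sqrt_le_sqrt
          have h1 : ‖B₁ x.fst‖ ≤ max ‖B₁‖ ‖B₂‖ * ‖x.fst‖ :=
            le_trans (B₁.le_opNorm _) (by gcongr; exact le_max_left _ _)
          have h2 : ‖B₂ x.snd‖ ≤ max ‖B₁‖ ‖B₂‖ * ‖x.snd‖ :=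
            le_trans (B₂.le_opNorm _) (by gcongr; exact le_max_right _ _)
          nlinarith [norm_nonneg (B₁ x.fst), norm_nonneg (B₂ x.snd), norm_nonneg x.fst,
            norm_nonneg x.snd]
        exact lt_of_le_of_lt hb (max_lt hB₁ hB₂)
      refine ⟨𝓑, hM, ?_⟩
      obtain ⟨hΩ, f, g, hfA, hfC, hgB, hgD, hf, hg, hdet⟩ := hmem
      have h12 : blk12 𝓑 g = 0 := by
        have : blk12 𝓑 g = B₁ 0 := rfl
        rw [this, map_zero]
      have h21 : blk21 𝓑 f = 0 := by
        have : blk21 𝓑 f = B₂ 0 := rfl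
        rw [this, map_zero]
      refine ⟨hΩ, f, g, hfA, hfC, hgB, hgD, hf, hg, ?_⟩
      rw [h12, h21, add_zero, add_zero]
      have h11 : blk11 𝓑 f = B₁ f := rfl
      have h22 : blk22 𝓑 g = B₂ g := rfl
      rw [h11, h22]
      exact hdet


end
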